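/- arXiv:1011.3090 — 4 statements merged into one kernel-verified Lean document; each statement's English description precedes it below -/
import Mathlib

section
/- For x ∈ ℝ_{≥0}^M with at least one x_m > 0 and p > 0, the minimum of ∑_{m=1}^M x_m y_m over y ∈ ℝ_{>0}^M subject to ∑_{m=1}^M y_m^{-p} ≤ 1 equals (∑_{m=1}^M x_m^{p/(1+p)})^{(1+p)/p}. -/
/-- For nonnegative `x` (not identically zero) and `p > 0`, the infimum of `∑ xₘ yₘ`
over positive `y` with `∑ yₘ^{-p} ≤ 1` equals `(∑ xₘ^{p/(1+p)})^{(1+p)/p}`. -/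
theorem stmt3 (M : ℕ) (x : Fin M → ℝ) (p : ℝ)
    (hx : ∀ m, 0 ≤ x m) (hex : ∃ m, 0 < x m) (hp : 0 < p) :
    IsGLB {z : ℝ | ∃ y : Fin M → ℝ, (∀ m, 0 < y m) ∧ (∑ m, (y m) ^ (-p)) ≤ 1 ∧
        z = ∑ m, x m * y m}
      ((∑ m, (x m) ^ (p / (1 + p))) ^ ((1 + p) / p)) := by
  have h1p : (0:ℝ) < 1 + p := by linarith
  set q : ℝ := p / (1 + p) with hqdef
  have hq0 : 0 < q := div_pos hp h1p
  set S : ℝ := ∑ m, (x m) ^ q with hSdef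
  have hS : 0 < S := by
    obtain ⟨m0, hm0⟩ := hex
    refine Finset.sum_pos' (fun m _ => Real.rpow_nonneg (hx m) q) ⟨m0, Finset.mem_univ m0, ?_⟩
    exact Real.rpow_pos_of_pos hm0 q
  set T : ℝ := S ^ ((1 + p) / p) with hTdef
  have hT : 0 < T := Real.rpow_pos_of_pos hS _
  have hq1 : q * ((1 + p) / p) = 1 := by
    rw [hqdef]; field_simp
  have hTq : T ^ q = S := by
    rw [hTdef, ← Real.rpow_mul hS.le]
    rw [mul_comm] at hq1
    rw [hq1, Real.rpow_one]
  have hpq : ((1 + p) / p).HolderConjugate (1 + p) := by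
    rw [Real.holderConjugate_iff]
    constructor
    · rw [lt_div_iff₀ hp]; linarith
    · rw [inv_div]; field_simp; ring
  constructor
  · -- lower bound
    rintro z ⟨y, hy, hcon, rfl⟩
    have hA : 0 ≤ ∑ m, x m * y m :=
      Finset.sum_nonneg fun m _ => mul_nonneg (hx m) (hy m).le
    have hcon0 : 0 ≤ ∑ m, (y m) ^ (-p) :=
      Finset.sum_nonneg fun m _ => Real.rpow_nonneg (hy m).le _
    have holder := Real.inner_le_Lp_mul_Lq_of_nonneg (s := Finset.univ)
      (f := fun m => (x m * y m) ^ q) (g := fun m => ((y m) ^ (-p)) ^ (1/(1+p))) hpq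
      (fun m _ => Real.rpow_nonneg (mul_nonneg (hx m) (hy m).le) q)
      (fun m _ => Real.rpow_nonneg (Real.rpow_nonneg (hy m).le _) _)
    have key : S ≤ (∑ m, x m * y m) ^ q := by
      have e1 : ∀ m : Fin M, ((x m * y m) ^ q) * (((y m) ^ (-p)) ^ (1/(1+p))) = x m ^ q := by
        intro m
        have h2 : ((y m) ^ (-p)) ^ (1/(1+p)) = (y m) ^ (-q) := by
          rw [← Real.rpow_mul (hy m).le]
          congr 1
          rw [hqdef]; field_simp
        rw [h2, Real.mul_rpow (hx m) (hy m).le, mul_assoc, ← Real.rpow_add (hy m),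
          add_neg_cancel, Real.rpow_zero, mul_one]
      have e2 : ∀ m : Fin M, (((x m * y m) ^ q)) ^ ((1+p)/p) = x m * y m := by
        intro m
        rw [← Real.rpow_mul (mul_nonneg (hx m) (hy m).le), hq1, Real.rpow_one]
      have e3 : ∀ m : Fin M, ((((y m) ^ (-p)) ^ (1/(1+p)))) ^ (1+p) = (y m) ^ (-p) := by
        intro m
        rw [← Real.rpow_mul (Real.rpow_nonneg (hy m).le _)]
        rw [one_div_mul_cancel h1p.ne', Real.rpow_one]
      calc S = ∑ m, ((x m * y m) ^ q) * (((y m) ^ (-p)) ^ (1/(1+p))) :=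
              (Finset.sum_congr rfl fun m _ => e1 m).symm
        _ ≤ (∑ m, (((x m * y m) ^ q)) ^ ((1+p)/p)) ^ (1/((1+p)/p)) *
              (∑ m, ((((y m) ^ (-p)) ^ (1/(1+p)))) ^ (1+p)) ^ (1/(1+p)) := holder
        _ = (∑ m, x m * y m) ^ q * (∑ m, (y m) ^ (-p)) ^ (1/(1+p)) := by
              rw [Finset.sum_congr rfl fun m _ => e2 m, Finset.sum_congr rfl fun m _ => e3 m,
                one_div_div]
        _ ≤ (∑ m, x m * y m) ^ q * 1 := by
              refine mul_le_mul_of_nonneg_left ?_ (Real.rpow_nonneg hA q)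
              exact Real.rpow_le_one hcon0 hcon (by positivity)
        _ = (∑ m, x m * y m) ^ q := mul_one _
    calc T = S ^ ((1+p)/p) := rfl
      _ ≤ ((∑ m, x m * y m) ^ q) ^ ((1+p)/p) := Real.rpow_le_rpow hS.le key (by positivity)
      _ = ∑ m, x m * y m := by rw [← Real.rpow_mul hA, hq1, Real.rpow_one]
  · -- greatest lower bound
    intro b hb
    by_contra hlt
    push_neg at hlt
    set c : ℝ := (b + T) / (2 * T) with hcdef
    have hc1 : 1 < c := by
      rw [hcdef, lt_div_iff₀ (by positivity)]; linarith
    have hc0 : 0 < c := lt_trans one_pos hc1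
    have hcT : c * T = (b + T) / 2 := by
      rw [hcdef]; field_simp
    have hcb : c * T < b := by rw [hcT]; linarith
    have hcp : c ^ (-p) < 1 :=
      Real.rpow_lt_one_of_one_lt_of_neg hc1 (by linarith)
    have hcpn : 0 ≤ c ^ (-p) := Real.rpow_nonneg hc0.le _
    have hM : 0 < (M : ℝ) := by
      obtain ⟨m0, _⟩ := hex
      exact_mod_cast Fin.pos m0
    set r : ℝ := (1 - c ^ (-p)) / M with hrdef
    have hr : 0 < r := div_pos (by linarith) hM
    set t : ℝ := r ^ (-1/p : ℝ) with htdef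
    have ht : 0 < t := Real.rpow_pos_of_pos hr _
    have htp : t ^ (-p) = r := by
      rw [htdef, ← Real.rpow_mul hr.le]
      have : (-1/p) * (-p) = 1 := by field_simp
      rw [this, Real.rpow_one]
    set y : Fin M → ℝ := fun m => if x m = 0 then t else c * (T / x m) ^ (1/(1+p)) with hydef
    have hxpos : ∀ m, x m ≠ 0 → 0 < x m := fun m hm => (hx m).lt_of_ne (Ne.symm hm)
    have hy : ∀ m, 0 < y m := by
      intro m
      rw [hydef]
      by_cases hm : x m = 0
      · simp [hm, ht]
      · simp only [hm, if_false]
        exact mul_pos hc0 (Real.rpow_pos_of_pos (div_pos hT (hxpos m hm)) _)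
    have hterm : ∀ m : Fin M, (y m) ^ (-p) ≤ t ^ (-p) + c ^ (-p) / S * (x m) ^ q := by
      intro m
      by_cases hm : x m = 0
      · have : y m = t := by rw [hydef]; simp [hm]
        rw [this]
        have : 0 ≤ c ^ (-p) / S * (x m) ^ q := by positivity
        linarith
      · have hxm := hxpos m hm
        have hym : y m = c * (T / x m) ^ (1/(1+p)) := by rw [hydef]; simp [hm]
        have heq : (y m) ^ (-p) = c ^ (-p) / S * (x m) ^ q := by
          rw [hym, Real.mul_rpow hc0.le (Real.rpow_nonneg (div_pos hT hxm).le _),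
            ← Real.rpow_mul (div_pos hT hxm).le]
          have e : (1/(1+p)) * (-p) = -q := by rw [hqdef]; field_simp
          rw [e, Real.rpow_neg (div_pos hT hxm).le, Real.div_rpow hT.le hxm.le,
            hTq]
          rw [inv_div, div_mul_eq_mul_div]
          ring
        rw [heq]
        have : 0 ≤ t ^ (-p) := Real.rpow_nonneg ht.le _
        linarith
    have hcon : (∑ m, (y m) ^ (-p)) ≤ 1 := by
      calc (∑ m, (y m) ^ (-p)) ≤ ∑ m, (t ^ (-p) + c ^ (-p) / S * (x m) ^ q) :=
            Finset.sum_le_sum fun m _ => hterm m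
        _ = (M : ℝ) * t ^ (-p) + c ^ (-p) / S * S := by
            rw [Finset.sum_add_distrib, Finset.sum_const, ← Finset.mul_sum, ← hSdef,
              Finset.card_univ, Fintype.card_fin, nsmul_eq_mul]
        _ = 1 := by
            rw [htp, hrdef, div_mul_cancel₀ _ hS.ne']
            field_simp
            ring
    have hval : (∑ m, x m * y m) = c * T := by
      have e : ∀ m : Fin M, x m * y m = c * T ^ (1/(1+p)) * (x m) ^ q := by
        intro m
        by_cases hm : x m = 0
        · rw [hm, Real.zero_rpow hq0.ne', zero_mul, mul_zero]
        · have hxm := hxpos m hm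
          have hym : y m = c * (T / x m) ^ (1/(1+p)) := by rw [hydef]; simp [hm]
          rw [hym, Real.div_rpow hT.le hxm.le]
          have hx1 : x m * (T ^ (1/(1+p)) / (x m) ^ (1/(1+p))) = T ^ (1/(1+p)) * (x m) ^ q := by
            rw [div_eq_mul_inv, ← Real.rpow_neg hxm.le, mul_comm (T ^ (1/(1+p))) _,
              ← mul_assoc]
            nth_rewrite 1 [← Real.rpow_one (x m)]
            rw [← Real.rpow_add hxm]
            have : (1 : ℝ) + -(1/(1+p)) = q := by rw [hqdef]; field_simp; ring
            rw [this, mul_comm]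
          rw [mul_comm c _, mul_assoc, mul_comm _ c, ← mul_assoc, mul_comm (x m) c, mul_assoc,
            hx1, ← mul_assoc]
      rw [Finset.sum_congr rfl fun m _ => e m, ← Finset.mul_sum, ← hSdef]
      have hTS : T ^ (1/(1+p)) * S = T := by
        rw [hTdef, ← Real.rpow_mul hS.le]
        nth_rewrite 2 [← Real.rpow_one S]
        rw [← Real.rpow_add hS]
        congr 1
        field_simp
      rw [mul_assoc, hTS]
    have hmem : (∑ m, x m * y m) ∈ {z : ℝ | ∃ y : Fin M → ℝ, (∀ m, 0 < y m) ∧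
        (∑ m, (y m) ^ (-p)) ≤ 1 ∧ z = ∑ m, x m * y m} := ⟨y, hy, hcon, rfl⟩
    have := hb hmem
    rw [hval] at this
    linarith
end

section
/- Let K_1, …, K_M be symmetric positive definite N×N real matrices, d ∈ ℝ_{>0}^M, and f̄ ∈ ℝ^N. Then the minimum of ∑_{m=1}^M f_mᵀ K_m^{-1} f_m / d_m over f_1, …, f_M ∈ ℝ^N subject to ∑_{m=1}^M f_m = f̄ equals f̄ᵀ (∑_{m=1}^M d_m K_m)^{-1} f̄, attained at f_m = d_m K_m (∑_{m'} d_{m'} K_{m'})^{-1} f̄. -/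
open Matrix Finset

section Aux
variable {N M : ℕ}

lemma sumMat_mulVec (s : Finset (Fin M)) (A : Fin M → Matrix (Fin N) (Fin N) ℝ)
    (v : Fin N → ℝ) : (∑ m ∈ s, A m) *ᵥ v = ∑ m ∈ s, A m *ᵥ v := by
  ext i
  simp [mulVec, dotProduct, Finset.sum_apply, Matrix.sum_apply, Finset.sum_mul]
  rw [Finset.sum_comm]

lemma sumVec_dotProduct (s : Finset (Fin M)) (v : Fin M → (Fin N → ℝ))
    (x : Fin N → ℝ) : (∑ m ∈ s, v m) ⬝ᵥ x = ∑ m ∈ s, v m ⬝ᵥ x := by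
  simp [dotProduct, Finset.sum_apply, Finset.sum_mul]
  rw [Finset.sum_comm]

lemma expand_quad (A : Matrix (Fin N) (Fin N) ℝ) (x y : Fin N → ℝ) :
    (x - y) ⬝ᵥ (A *ᵥ (x - y)) =
      x ⬝ᵥ (A *ᵥ x) - x ⬝ᵥ (A *ᵥ y) - y ⬝ᵥ (A *ᵥ x) + y ⬝ᵥ (A *ᵥ y) := by
  simp [mulVec_sub, dotProduct_sub, sub_dotProduct]
  ring

lemma herm_swap {A : Matrix (Fin N) (Fin N) ℝ} (hA : A.IsHermitian)
    (x y : Fin N → ℝ) : x ⬝ᵥ (A *ᵥ y) = y ⬝ᵥ (A *ᵥ x) := by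
  rw [dotProduct_mulVec, ← mulVec_transpose, dotProduct_comm]
  congr 1
  rw [show Aᵀ = A from hA]
end Aux

/-- Finite-dimensional combined-kernel norm identity: for symmetric positive definite
`K₁,…,K_M`, positive weights `d`, and `f̄ ∈ ℝ^N`, the minimum of
`∑ₘ fₘᵀ Kₘ⁻¹ fₘ / dₘ` over decompositions `∑ₘ fₘ = f̄` is
`f̄ᵀ (∑ₘ dₘ Kₘ)⁻¹ f̄`, attained at `fₘ = dₘ Kₘ (∑ₘ' dₘ' Kₘ')⁻¹ f̄`. -/
theorem stmt9 (N M : ℕ) (hM : 0 < M) (K : Fin M → Matrix (Fin N) (Fin N) ℝ)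
    (hK : ∀ m, (K m).PosDef) (d : Fin M → ℝ) (hd : ∀ m, 0 < d m)
    (fbar : Fin N → ℝ) :
    IsLeast {z : ℝ | ∃ f : Fin M → (Fin N → ℝ), (∑ m, f m) = fbar ∧
        z = ∑ m, (f m) ⬝ᵥ ((K m)⁻¹ *ᵥ f m) / d m}
      (fbar ⬝ᵥ ((∑ m, d m • K m)⁻¹ *ᵥ fbar))
    ∧ (∑ m, d m • (K m *ᵥ ((∑ m', d m' • K m')⁻¹ *ᵥ fbar))) = fbar
    ∧ (∑ m, (d m • (K m *ᵥ ((∑ m', d m' • K m')⁻¹ *ᵥ fbar))) ⬝ᵥ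
          ((K m)⁻¹ *ᵥ (d m • (K m *ᵥ ((∑ m', d m' • K m')⁻¹ *ᵥ fbar)))) / d m)
        = fbar ⬝ᵥ ((∑ m, d m • K m)⁻¹ *ᵥ fbar) := by
  set S : Matrix (Fin N) (Fin N) ℝ := ∑ m, d m • K m with hSdef
  have hSpd : S.PosDef := by
    refine posDef_iff_dotProduct_mulVec.mpr ⟨?_, ?_⟩
    · show Sᴴ = S
      simp only [hSdef, conjTranspose_sum, conjTranspose_smul]
      refine Finset.sum_congr rfl fun m _ => ?_
      rw [show (K m)ᴴ = K m from (hK m).1]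
      simp
    · intro x hx
      have : star x ⬝ᵥ (S *ᵥ x) = ∑ m, d m * (star x ⬝ᵥ (K m *ᵥ x)) := by
        rw [hSdef, sumMat_mulVec]
        simp [dotProduct, Finset.sum_apply, Finset.mul_sum, smul_mulVec]
        rw [Finset.sum_comm]
        refine Finset.sum_congr rfl fun m _ => Finset.sum_congr rfl fun i _ => ?_
        ring
      rw [this]
      refine Finset.sum_pos (fun m _ => mul_pos (hd m) ((hK m).dotProduct_mulVec_pos hx)) ?_
      exact Finset.univ_nonempty_iff.2 (Fin.pos_iff_nonempty.mp hM)
  have hSunit : IsUnit S.det := isUnit_iff_ne_zero.2 hSpd.det_pos.ne'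
  have hSS : S * S⁻¹ = 1 := mul_nonsing_inv S hSunit
  set w : Fin N → ℝ := S⁻¹ *ᵥ fbar with hw
  have hsum : (∑ m, d m • (K m *ᵥ w)) = fbar := by
    have h1 : (∑ m, d m • (K m *ᵥ w)) = S *ᵥ w := by
      rw [hSdef, sumMat_mulVec]
      exact Finset.sum_congr rfl fun m _ => (smul_mulVec _ _ _).symm
    rw [h1, hw, mulVec_mulVec, hSS, one_mulVec]
  have hKinv : ∀ m, (K m)⁻¹ *ᵥ (K m *ᵥ w) = w := fun m => by
    rw [mulVec_mulVec, nonsing_inv_mul _ (isUnit_iff_ne_zero.2 (hK m).det_pos.ne'),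
      one_mulVec]
  have hterm : ∀ m, (d m • (K m *ᵥ w)) ⬝ᵥ ((K m)⁻¹ *ᵥ (d m • (K m *ᵥ w))) / d m
      = d m * ((K m *ᵥ w) ⬝ᵥ w) := by
    intro m
    rw [mulVec_smul, hKinv m, smul_dotProduct, dotProduct_smul]
    field_simp [(hd m).ne']
    simp only [smul_eq_mul]; ring
  have hsplit : ∑ m, d m * ((K m *ᵥ w) ⬝ᵥ w) = fbar ⬝ᵥ w := by
    have : ∑ m, d m * ((K m *ᵥ w) ⬝ᵥ w) = (∑ m, d m • (K m *ᵥ w)) ⬝ᵥ w := by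
      rw [sumVec_dotProduct]
      exact Finset.sum_congr rfl fun m _ => by rw [smul_dotProduct]; rfl
    rw [this, hsum]
  have hval : (∑ m, (d m • (K m *ᵥ w)) ⬝ᵥ
        ((K m)⁻¹ *ᵥ (d m • (K m *ᵥ w))) / d m) = fbar ⬝ᵥ w := by
    rw [Finset.sum_congr rfl fun m _ => hterm m, hsplit]
  refine ⟨⟨⟨fun m => d m • (K m *ᵥ w), hsum, hval.symm⟩, ?_⟩, hsum, hval⟩
  -- lower bound
  rintro z ⟨f, hf, rfl⟩
  have key : ∀ m, f m ⬝ᵥ ((K m)⁻¹ *ᵥ f m) / d m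
      = (f m - d m • (K m *ᵥ w)) ⬝ᵥ ((K m)⁻¹ *ᵥ (f m - d m • (K m *ᵥ w))) / d m
        + 2 * (f m ⬝ᵥ w) - d m * ((K m *ᵥ w) ⬝ᵥ w) := by
    intro m
    have hherm : ((K m)⁻¹).IsHermitian := (hK m).1.inv
    rw [expand_quad]
    rw [herm_swap hherm (d m • (K m *ᵥ w)) (f m)]
    rw [mulVec_smul, hKinv m, dotProduct_smul, smul_dotProduct, dotProduct_smul]
    have hcomm : (K m *ᵥ w) ⬝ᵥ w = w ⬝ᵥ (K m *ᵥ w) := dotProduct_comm _ _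
    field_simp [(hd m).ne']
    rw [hcomm]
    ring
  rw [Finset.sum_congr rfl fun m _ => key m]
  rw [Finset.sum_sub_distrib, Finset.sum_add_distrib, ← Finset.mul_sum]
  have hfw : ∑ m, f m ⬝ᵥ w = fbar ⬝ᵥ w := by
    rw [← sumVec_dotProduct, hf]
  rw [hfw, hsplit]
  have hnn : 0 ≤ ∑ m, (f m - d m • (K m *ᵥ w)) ⬝ᵥ
      ((K m)⁻¹ *ᵥ (f m - d m • (K m *ᵥ w))) / d m := by
    refine Finset.sum_nonneg fun m _ => div_nonneg ?_ (hd m).le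
    have := ((hK m).inv.posSemidef).dotProduct_mulVec_nonneg (f m - d m • (K m *ᵥ w))
    simpa using this
  linarith
end

section
/- Let K_1, …, K_M be symmetric positive semidefinite N×N matrices, σ > 0, and x ∈ ℝ_{≥0}^M. Then the function η ↦ ∑_{m=1}^M x_m e^{−η_m} + log det(σ² I_N + ∑_{m=1}^M e^{η_m} K_m) is convex on ℝ^M. -/
open Matrix Finset Equiv Real

namespace Stmt15Aux

variable {N : ℕ} {J : Type*} [Fintype J] [DecidableEq J]

lemma entry_formula (C : Matrix J (Fin N) ℝ) (d : J → ℝ) (a b : Fin N) :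
    (Cᵀ * Matrix.diagonal d * C) a b = ∑ j, d j * C j a * C j b := by
  simp only [Matrix.mul_apply, Matrix.diagonal_apply, Matrix.transpose_apply, mul_ite,
    mul_zero, Finset.sum_ite_eq', Finset.mem_univ, if_true, Finset.sum_mul]
  exact Finset.sum_congr rfl fun j _ => by ring

lemma step1 (C : Matrix J (Fin N) ℝ) (d : J → ℝ) :
    (Cᵀ * Matrix.diagonal d * C).det =
      ∑ f : Fin N → J, (∏ k, d (f k)) *
        ((∏ k, C (f k) k) * (Matrix.of fun k l => C (f k) l).det) := by
  calc (Cᵀ * Matrix.diagonal d * C).det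
      = ∑ σ : Equiv.Perm (Fin N), ((Equiv.Perm.sign σ : ℤ) : ℝ) *
          ∏ k, ∑ j, d j * C j (σ k) * C j k := by
        rw [Matrix.det_apply']
        exact Finset.sum_congr rfl fun σ _ => by
          congr 1; exact Finset.prod_congr rfl fun k _ => entry_formula C d (σ k) k
    _ = ∑ σ : Equiv.Perm (Fin N), ∑ f : Fin N → J, ((Equiv.Perm.sign σ : ℤ) : ℝ) *
          ∏ k, (d (f k) * C (f k) (σ k) * C (f k) k) := by
        simp_rw [Finset.prod_univ_sum, Fintype.piFinset_univ, Finset.mul_sum]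
    _ = ∑ f : Fin N → J, ∑ σ : Equiv.Perm (Fin N), ((Equiv.Perm.sign σ : ℤ) : ℝ) *
          ∏ k, (d (f k) * C (f k) (σ k) * C (f k) k) := Finset.sum_comm
    _ = ∑ f : Fin N → J, (∏ k, d (f k)) *
          ((∏ k, C (f k) k) * (Matrix.of fun k l => C (f k) l).det) := by
        refine Finset.sum_congr rfl fun f _ => ?_
        rw [← Matrix.det_transpose (Matrix.of fun k l => C (f k) l), Matrix.det_apply']
        rw [Finset.mul_sum, Finset.mul_sum]
        refine Finset.sum_congr rfl fun σ _ => ?_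
        have h : ∀ k, d (f k) * C (f k) (σ k) * C (f k) k
            = (d (f k) * C (f k) k) * C (f k) (σ k) := fun k => by ring
        simp_rw [h, Finset.prod_mul_distrib]
        simp only [Matrix.transpose_apply, Matrix.of_apply]
        ring

lemma sym_sum (C : Matrix J (Fin N) ℝ) (f : Fin N → J) :
    ∑ σ : Equiv.Perm (Fin N),
        ((∏ k, C (f (σ k)) k) * (Matrix.of fun k l => C (f (σ k)) l).det)
      = ((Matrix.of fun k l => C (f k) l).det) ^ 2 := by
  have h1 : ∀ σ : Equiv.Perm (Fin N),
      (Matrix.of fun k l => C (f (σ k)) l)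
        = (Matrix.of fun k l => C (f k) l).submatrix σ id := fun σ => rfl
  calc ∑ σ : Equiv.Perm (Fin N),
        ((∏ k, C (f (σ k)) k) * (Matrix.of fun k l => C (f (σ k)) l).det)
      = (∑ σ : Equiv.Perm (Fin N), ((Equiv.Perm.sign σ : ℤ) : ℝ) *
          ∏ k, (Matrix.of fun k l => C (f k) l) (σ k) k) *
            (Matrix.of fun k l => C (f k) l).det := by
        rw [Finset.sum_mul]
        refine Finset.sum_congr rfl fun σ _ => ?_
        rw [h1, Matrix.det_permute]
        simp only [Matrix.of_apply]
        push_cast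
        ring
    _ = ((Matrix.of fun k l => C (f k) l).det) ^ 2 := by
        rw [← Matrix.det_apply']; ring

lemma expansion (C : Matrix J (Fin N) ℝ) (d : J → ℝ) :
    (Cᵀ * Matrix.diagonal d * C).det =
      ((N.factorial : ℝ))⁻¹ * ∑ f : Fin N → J, (∏ k, d (f k)) *
        ((Matrix.of fun k l => C (f k) l).det) ^ 2 := by
  have hcard : (Fintype.card (Equiv.Perm (Fin N)) : ℝ) = (N.factorial : ℝ) := by
    rw [Fintype.card_perm, Fintype.card_fin]
  have key : ∀ σ : Equiv.Perm (Fin N),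
      (∑ f : Fin N → J, (∏ k, d (f k)) *
        ((∏ k, C (f (σ k)) k) * (Matrix.of fun k l => C (f (σ k)) l).det))
      = ∑ f : Fin N → J, (∏ k, d (f k)) *
        ((∏ k, C (f k) k) * (Matrix.of fun k l => C (f k) l).det) := by
    intro σ
    have hbij : Function.Bijective (fun f : Fin N → J => f ∘ σ) := by
      constructor
      · intro f g h
        funext k
        have := congrFun h (σ.symm k)
        simpa using this
      · intro g
        exact ⟨g ∘ σ.symm, funext fun k => by simp⟩
    refine Fintype.sum_bijective _ hbij _ _ fun f => ?_
    have hP : (∏ k, d ((f ∘ σ) k)) = ∏ k, d (f k) :=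
      Equiv.prod_comp σ fun k => d (f k)
    simp only [Function.comp] at hP ⊢
    rw [hP]
  have double : ∑ f : Fin N → J, (∏ k, d (f k)) *
        ((Matrix.of fun k l => C (f k) l).det) ^ 2
      = (N.factorial : ℝ) * ∑ f : Fin N → J, (∏ k, d (f k)) *
        ((∏ k, C (f k) k) * (Matrix.of fun k l => C (f k) l).det) := by
    calc ∑ f : Fin N → J, (∏ k, d (f k)) *
          ((Matrix.of fun k l => C (f k) l).det) ^ 2
        = ∑ f : Fin N → J, (∏ k, d (f k)) *
            ∑ σ : Equiv.Perm (Fin N),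
              ((∏ k, C (f (σ k)) k) * (Matrix.of fun k l => C (f (σ k)) l).det) := by
          refine Finset.sum_congr rfl fun f _ => ?_
          rw [sym_sum]
      _ = ∑ σ : Equiv.Perm (Fin N), ∑ f : Fin N → J, (∏ k, d (f k)) *
              ((∏ k, C (f (σ k)) k) * (Matrix.of fun k l => C (f (σ k)) l).det) := by
          simp_rw [Finset.mul_sum]; exact Finset.sum_comm
      _ = ∑ _σ : Equiv.Perm (Fin N), ∑ f : Fin N → J, (∏ k, d (f k)) *
              ((∏ k, C (f k) k) * (Matrix.of fun k l => C (f k) l).det) :=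
          Finset.sum_congr rfl fun σ _ => key σ
      _ = (N.factorial : ℝ) * ∑ f : Fin N → J, (∏ k, d (f k)) *
              ((∏ k, C (f k) k) * (Matrix.of fun k l => C (f k) l).det) := by
          rw [Finset.sum_const, nsmul_eq_mul, ← hcard]
          simp
  have hN : (N.factorial : ℝ) ≠ 0 := Nat.cast_ne_zero.mpr (N.factorial_ne_zero)
  rw [step1, double, ← mul_assoc, inv_mul_cancel₀ hN, one_mul]

lemma hoelder {ι : Type*} [Fintype ι] (c p q : ι → ℝ) (hc : ∀ i, 0 ≤ c i)
    (hp : ∀ i, 0 ≤ p i) (hq : ∀ i, 0 ≤ q i) {θ τ : ℝ} (hθ : 0 < θ) (hτ : 0 < τ)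
    (hsum : θ + τ = 1) :
    ∑ i, c i * (p i ^ θ * q i ^ τ) ≤ (∑ i, c i * p i) ^ θ * (∑ i, c i * q i) ^ τ := by
  have hθ1 : θ < 1 := by linarith
  have hconj : Real.HolderConjugate θ⁻¹ τ⁻¹ :=
    Real.holderConjugate_iff.mpr ⟨(one_lt_inv₀ hθ).mpr hθ1, by rw [inv_inv, inv_inv]; exact hsum⟩
  have H := Real.inner_le_Lp_mul_Lq_of_nonneg (Finset.univ (α := ι))
      (f := fun i => (c i * p i) ^ θ) (g := fun i => (c i * q i) ^ τ) hconj
      (fun i _ => Real.rpow_nonneg (mul_nonneg (hc i) (hp i)) _)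
      (fun i _ => Real.rpow_nonneg (mul_nonneg (hc i) (hq i)) _)
  have e1 : ∀ i, (c i * p i) ^ θ * (c i * q i) ^ τ = c i * (p i ^ θ * q i ^ τ) := by
    intro i
    rw [Real.mul_rpow (hc i) (hp i), Real.mul_rpow (hc i) (hq i)]
    have : c i ^ θ * c i ^ τ = c i := by
      rw [← Real.rpow_add' (hc i) (by rw [hsum]; norm_num), hsum, Real.rpow_one]
    calc c i ^ θ * p i ^ θ * (c i ^ τ * q i ^ τ)
        = (c i ^ θ * c i ^ τ) * (p i ^ θ * q i ^ τ) := by ring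
      _ = c i * (p i ^ θ * q i ^ τ) := by rw [this]
  have e2 : ∀ i, ((c i * p i) ^ θ) ^ θ⁻¹ = c i * p i := by
    intro i
    rw [← Real.rpow_mul (mul_nonneg (hc i) (hp i)), mul_inv_cancel₀ hθ.ne', Real.rpow_one]
  have e3 : ∀ i, ((c i * q i) ^ τ) ^ τ⁻¹ = c i * q i := by
    intro i
    rw [← Real.rpow_mul (mul_nonneg (hc i) (hq i)), mul_inv_cancel₀ hτ.ne', Real.rpow_one]
  simp_rw [e1, e2, e3, one_div, inv_inv] at H
  exact H

end Stmt15Aux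

/-- Convexity of the reparameterized marginal-likelihood objective:
`η ↦ ∑ₘ xₘ e^{−ηₘ} + log det(σ²I + ∑ₘ e^{ηₘ} Kₘ)` is convex on `ℝ^M`
for PSD `Kₘ`, `σ > 0`, and `x ≥ 0`. -/
theorem stmt15 (N M : ℕ) (K : Fin M → Matrix (Fin N) (Fin N) ℝ)
    (hK : ∀ m, (K m).PosSemidef) (σ : ℝ) (hσ : 0 < σ)
    (x : Fin M → ℝ) (hx : ∀ m, 0 ≤ x m) :
    ConvexOn ℝ Set.univ (fun η : Fin M → ℝ =>
      (∑ m, x m * Real.exp (-η m)) +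
      Real.log (Matrix.det
        (σ ^ 2 • (1 : Matrix (Fin N) (Fin N) ℝ) + ∑ m, Real.exp (η m) • K m))) := by
  classical
  -- part 1: convexity of the exponential sum
  have h1 : ConvexOn ℝ Set.univ (fun η : Fin M → ℝ => ∑ m, x m * Real.exp (-η m)) := by
    have hterm : ∀ m : Fin M, ConvexOn ℝ Set.univ
        (fun η : Fin M → ℝ => x m * Real.exp (-η m)) := by
      intro m
      have hexp : ConvexOn ℝ Set.univ (fun η : Fin M → ℝ => Real.exp (-η m)) := by
        have := convexOn_exp.comp_affineMap
          (-(LinearMap.proj m : (Fin M → ℝ) →ₗ[ℝ] ℝ)).toAffineMap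
        simpa [Function.comp_def, Pi.neg_apply, Function.eval] using this
      have := hexp.smul (hx m)
      simpa [smul_eq_mul] using this
    have : ∀ s : Finset (Fin M), ConvexOn ℝ Set.univ
        (fun η : Fin M → ℝ => ∑ m ∈ s, x m * Real.exp (-η m)) := by
      intro s
      induction s using Finset.induction with
      | empty => simpa using convexOn_const (0 : ℝ) convex_univ
      | insert _ _ h ih =>
          simp_rw [Finset.sum_insert h]
          exact (hterm _).add ih
    exact this Finset.univ
  -- set up the representation  σ²I + ∑ e^{ηₘ}Kₘ = Cᵀ D C
  choose B hB using fun m => (show ∃ B : Matrix (Fin N) (Fin N) ℝ, K m = Bᴴ * B by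
    open scoped MatrixOrder in
    obtain ⟨B, hB⟩ := CStarAlgebra.nonneg_iff_eq_star_mul_self.mp (hK m).nonneg
    exact ⟨B, hB⟩)
  set J := (Fin N) ⊕ (Fin M × Fin N) with hJ
  set C : Matrix J (Fin N) ℝ := Matrix.of (Sum.elim
      (fun i k => if i = k then (1 : ℝ) else 0)
      (fun p k => B p.1 p.2 k)) with hC
  set d : (Fin M → ℝ) → J → ℝ := fun η => Sum.elim (fun _ => σ ^ 2)
      (fun p => Real.exp (η p.1)) with hd
  have hrep : ∀ η : Fin M → ℝ,
      σ ^ 2 • (1 : Matrix (Fin N) (Fin N) ℝ) + ∑ m, Real.exp (η m) • K m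
        = Cᵀ * Matrix.diagonal (d η) * C := by
    intro η
    ext k l
    rw [Stmt15Aux.entry_formula]
    rw [Fintype.sum_sum_type]
    have hleft : (∑ i : Fin N, d η (Sum.inl i) * C (Sum.inl i) k * C (Sum.inl i) l)
        = (σ ^ 2 • (1 : Matrix (Fin N) (Fin N) ℝ)) k l := by
      simp [hC, hd, Matrix.one_apply, ite_and, mul_ite, Finset.sum_ite_eq, eq_comm]
    have hright : (∑ p : Fin M × Fin N, d η (Sum.inr p) * C (Sum.inr p) k * C (Sum.inr p) l)
        = (∑ m, Real.exp (η m) • K m) k l := by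
      rw [Fintype.sum_prod_type]
      simp only [Matrix.sum_apply, Matrix.smul_apply, smul_eq_mul]
      refine Finset.sum_congr rfl fun m _ => ?_
      rw [hB m]
      simp only [hC, hd, Sum.elim_inr, Matrix.of_apply, Matrix.mul_apply,
        Matrix.conjTranspose_apply, star_trivial, Finset.mul_sum]
      exact Finset.sum_congr rfl fun i _ => by ring
    rw [hleft, hright]
    simp [Matrix.add_apply]
  -- the determinant as a nonnegative combination of exponentials
  set c : (Fin N → J) → ℝ := fun f => ((Matrix.of fun k l => C (f k) l).det) ^ 2 with hc
  have hexp : ∀ η : Fin M → ℝ,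
      (σ ^ 2 • (1 : Matrix (Fin N) (Fin N) ℝ) + ∑ m, Real.exp (η m) • K m).det
        = ((N.factorial : ℝ))⁻¹ * ∑ f : Fin N → J, (∏ k, d η (f k)) * c f := by
    intro η
    rw [hrep η, Stmt15Aux.expansion]
  have hdpos : ∀ η j, 0 < d η j := by
    rintro η (i | p)
    · simpa [hd] using pow_pos hσ 2
    · simpa [hd] using Real.exp_pos _
  set F : (Fin M → ℝ) → ℝ := fun η =>
      (σ ^ 2 • (1 : Matrix (Fin N) (Fin N) ℝ) + ∑ m, Real.exp (η m) • K m).det with hF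
  have hFpos : ∀ η, 0 < F η := by
    intro η
    simp only [hF]
    rw [hexp η]
    refine mul_pos (by positivity) ?_
    refine Finset.sum_pos' (fun f _ => mul_nonneg
      (Finset.prod_nonneg fun k _ => (hdpos η (f k)).le) (sq_nonneg _)) ?_
    refine ⟨Sum.inl, Finset.mem_univ _, ?_⟩
    have h1 : (Matrix.of fun k l => C (Sum.inl k) l) = (1 : Matrix (Fin N) (Fin N) ℝ) := by
      ext a b
      simp [hC, Matrix.one_apply]
    refine mul_pos (Finset.prod_pos fun k _ => hdpos η _) ?_
    simp only [hc]
    rw [h1]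
    simp
  -- log-convexity of F
  have h2 : ConvexOn ℝ Set.univ (fun η => Real.log (F η)) := by
    refine ⟨convex_univ, ?_⟩
    intro a _ b _ θ τ hθ hτ hθτ
    rcases hθ.eq_or_lt with rfl | hθ'
    · have : τ = 1 := by linarith
      subst this
      simp
    rcases hτ.eq_or_lt with rfl | hτ'
    · have : θ = 1 := by linarith
      subst this
      simp
    -- multiplicativity of the diagonal weights
    have hdmul : ∀ j, d (θ • a + τ • b) j = d a j ^ θ * d b j ^ τ := by
      rintro (i | p)
      · simp only [hd, Sum.elim_inl]
        rw [← Real.rpow_add (pow_pos hσ 2), hθτ, Real.rpow_one]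
      · simp only [hd, Sum.elim_inr, Pi.add_apply, Pi.smul_apply, smul_eq_mul]
        rw [mul_comm θ, mul_comm τ, Real.exp_add, Real.exp_mul, Real.exp_mul]
    have hFmul : F (θ • a + τ • b) ≤ F a ^ θ * F b ^ τ := by
      simp only [hF]
      rw [hexp, hexp, hexp]
      have hPmul : ∀ f : Fin N → J,
          (∏ k, d (θ • a + τ • b) (f k))
            = (∏ k, d a (f k)) ^ θ * (∏ k, d b (f k)) ^ τ := by
        intro f
        rw [← Real.finset_prod_rpow _ _ (fun k _ => (hdpos a (f k)).le),
          ← Real.finset_prod_rpow _ _ (fun k _ => (hdpos b (f k)).le),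
          ← Finset.prod_mul_distrib]
        exact Finset.prod_congr rfl fun k _ => hdmul (f k)
      have hH : ∑ f : Fin N → J, (∏ k, d (θ • a + τ • b) (f k)) * c f
          ≤ (∑ f : Fin N → J, (∏ k, d a (f k)) * c f) ^ θ *
            (∑ f : Fin N → J, (∏ k, d b (f k)) * c f) ^ τ := by
        have := Stmt15Aux.hoelder c (fun f => ∏ k, d a (f k)) (fun f => ∏ k, d b (f k))
          (fun f => sq_nonneg _)
          (fun f => Finset.prod_nonneg fun k _ => (hdpos a (f k)).le)
          (fun f => Finset.prod_nonneg fun k _ => (hdpos b (f k)).le)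
          hθ' hτ' hθτ
        calc ∑ f : Fin N → J, (∏ k, d (θ • a + τ • b) (f k)) * c f
            = ∑ f : Fin N → J, c f * ((∏ k, d a (f k)) ^ θ * (∏ k, d b (f k)) ^ τ) := by
              refine Finset.sum_congr rfl fun f _ => ?_
              rw [hPmul f]; ring
          _ ≤ (∑ f : Fin N → J, c f * (∏ k, d a (f k))) ^ θ *
              (∑ f : Fin N → J, c f * (∏ k, d b (f k))) ^ τ := this
          _ = (∑ f : Fin N → J, (∏ k, d a (f k)) * c f) ^ θ *
              (∑ f : Fin N → J, (∏ k, d b (f k)) * c f) ^ τ := by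
              simp_rw [mul_comm]
      have hnn : (0:ℝ) ≤ ((N.factorial : ℝ))⁻¹ := by positivity
      have hSa : (0:ℝ) ≤ ∑ f : Fin N → J, (∏ k, d a (f k)) * c f :=
        Finset.sum_nonneg fun f _ => mul_nonneg
          (Finset.prod_nonneg fun k _ => (hdpos a (f k)).le) (sq_nonneg _)
      have hSb : (0:ℝ) ≤ ∑ f : Fin N → J, (∏ k, d b (f k)) * c f :=
        Finset.sum_nonneg fun f _ => mul_nonneg
          (Finset.prod_nonneg fun k _ => (hdpos b (f k)).le) (sq_nonneg _)
      calc ((N.factorial : ℝ))⁻¹ * ∑ f : Fin N → J, (∏ k, d (θ • a + τ • b) (f k)) * c f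
          ≤ ((N.factorial : ℝ))⁻¹ * ((∑ f : Fin N → J, (∏ k, d a (f k)) * c f) ^ θ *
              (∑ f : Fin N → J, (∏ k, d b (f k)) * c f) ^ τ) :=
            mul_le_mul_of_nonneg_left hH hnn
        _ = (((N.factorial : ℝ))⁻¹ * ∑ f : Fin N → J, (∏ k, d a (f k)) * c f) ^ θ *
            (((N.factorial : ℝ))⁻¹ * ∑ f : Fin N → J, (∏ k, d b (f k)) * c f) ^ τ := by
            have hfac : ((N.factorial : ℝ))⁻¹ ^ θ * ((N.factorial : ℝ))⁻¹ ^ τ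
                = ((N.factorial : ℝ))⁻¹ := by
              rw [← Real.rpow_add' hnn (by rw [hθτ]; norm_num), hθτ, Real.rpow_one]
            rw [Real.mul_rpow hnn hSa, Real.mul_rpow hnn hSb]
            conv_lhs => rw [← hfac]
            simp only [hc]
            ring
    have hlog := Real.log_le_log (hFpos (θ • a + τ • b)) hFmul
    rw [Real.log_mul (Real.rpow_pos_of_pos (hFpos a) θ).ne' (Real.rpow_pos_of_pos (hFpos b) τ).ne',
      Real.log_rpow (hFpos a), Real.log_rpow (hFpos b)] at hlog
    simpa using hlog
  exact h1.add h2
end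

section
/- Let K_1, …, K_M be symmetric positive definite N×N matrices, σ > 0, y ∈ ℝ^N, and d ∈ ℝ_{>0}^M. Then min over (f_1,…,f_M) ∈ (ℝ^N)^M of (1/(2σ²))‖y − ∑_m f_m‖² + (1/2)∑_m f_mᵀK_m^{-1}f_m/d_m equals (1/2) yᵀ (σ²I_N + ∑_m d_m K_m)^{-1} y. -/
open Matrix

private lemma dotmv_symm {n : ℕ} (A : Matrix (Fin n) (Fin n) ℝ) (hA : Aᵀ = A)
    (u v : Fin n → ℝ) : u ⬝ᵥ (A *ᵥ v) = v ⬝ᵥ (A *ᵥ u) := by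
  rw [dotProduct_mulVec, ← mulVec_transpose, hA, dotProduct_comm]

private lemma sum_mulVec' {n M : ℕ} (A : Fin M → Matrix (Fin n) (Fin n) ℝ) (v : Fin n → ℝ) :
    (∑ m, A m) *ᵥ v = ∑ m, (A m) *ᵥ v := by
  ext i
  simp only [mulVec, dotProduct, Finset.sum_apply, Matrix.sum_apply, Finset.sum_mul]
  rw [Finset.sum_comm]

private lemma dotProduct_sum' {n M : ℕ} (u : Fin n → ℝ) (w : Fin M → (Fin n → ℝ)) :
    u ⬝ᵥ (∑ m, w m) = ∑ m, u ⬝ᵥ w m := by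
  simp only [dotProduct, Finset.sum_apply, Finset.mul_sum]
  rw [Finset.sum_comm]

/-- Quadratic variational representation of the Gaussian marginal likelihood data term:
`min_f (1/(2σ²))‖y − ∑ₘ fₘ‖² + (1/2)∑ₘ fₘᵀKₘ⁻¹fₘ/dₘ = (1/2) yᵀ(σ²I + ∑ₘ dₘKₘ)⁻¹ y`. -/
theorem stmt16 (N M : ℕ) (K : Fin M → Matrix (Fin N) (Fin N) ℝ)
    (hK : ∀ m, (K m).PosDef) (σ : ℝ) (hσ : 0 < σ) (y : Fin N → ℝ)
    (d : Fin M → ℝ) (hd : ∀ m, 0 < d m) :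
    IsLeast {z : ℝ | ∃ f : Fin M → (Fin N → ℝ),
        z = 1 / (2 * σ ^ 2) * ((y - ∑ m, f m) ⬝ᵥ (y - ∑ m, f m))
          + 1 / 2 * ∑ m, (f m) ⬝ᵥ ((K m)⁻¹ *ᵥ f m) / d m}
      (1 / 2 * (y ⬝ᵥ ((σ ^ 2 • (1 : Matrix (Fin N) (Fin N) ℝ)
          + ∑ m, d m • K m)⁻¹ *ᵥ y))) := by
  classical
  have hσ2 : (0:ℝ) < σ ^ 2 := by positivity
  set S : Matrix (Fin N) (Fin N) ℝ :=
    σ ^ 2 • (1 : Matrix (Fin N) (Fin N) ℝ) + ∑ m, d m • K m with hSdef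
  -- S is positive definite
  have hsumPSD : (∑ m, d m • K m : Matrix (Fin N) (Fin N) ℝ).PosSemidef := by
    refine Matrix.PosSemidef.of_dotProduct_mulVec_nonneg ?_ ?_
    · show _ = _
      rw [conjTranspose_sum]
      refine Finset.sum_congr rfl fun m _ => ?_
      have ht : (K m)ᵀ = K m := (hK m).1
      rw [conjTranspose_smul]
      show star (d m) • (K m)ᵀ = _
      rw [star_trivial, ht]
    · intro x
      rw [star_trivial, sum_mulVec', dotProduct_sum']
      refine Finset.sum_nonneg fun m _ => ?_
      rw [smul_mulVec, dotProduct_smul]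
      have := (hK m).posSemidef.dotProduct_mulVec_nonneg x
      rw [star_trivial] at this
      exact smul_nonneg (hd m).le this
  have hS : S.PosDef := by
    refine Matrix.PosDef.add_posSemidef ?_ hsumPSD
    refine Matrix.PosDef.of_dotProduct_mulVec_pos ?_ ?_
    · show _ = _
      show star (σ ^ 2) • (1 : Matrix (Fin N) (Fin N) ℝ)ᴴ = _
      rw [star_trivial, conjTranspose_one]
    · intro x hx
      rw [star_trivial, smul_mulVec, one_mulVec, dotProduct_smul, smul_eq_mul]
      have hxx : 0 < x ⬝ᵥ x := by
        have := Matrix.dotProduct_star_self_pos_iff (v := x) |>.2 hx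
        rwa [star_trivial] at this
      positivity
  have hdetS : IsUnit S.det := hS.det_pos.ne'.isUnit
  set a : Fin N → ℝ := S⁻¹ *ᵥ y with ha
  have hSa : S *ᵥ a = y := by
    rw [ha, mulVec_mulVec, Matrix.mul_nonsing_inv S hdetS, one_mulVec]
  have hay : a ⬝ᵥ y = y ⬝ᵥ (S⁻¹ *ᵥ y) := by rw [ha, dotProduct_comm]
  clear_value a
  -- the quadratic identity
  have hSq : σ ^ 2 * (a ⬝ᵥ a) + ∑ m, d m * (a ⬝ᵥ (K m *ᵥ a)) = a ⬝ᵥ y := by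
    conv_rhs => rw [← hSa]
    rw [hSdef, add_mulVec, dotProduct_add, smul_mulVec, one_mulVec, dotProduct_smul,
      sum_mulVec', dotProduct_sum']
    congr 1
    exact Finset.sum_congr rfl fun m _ => by
      rw [smul_mulVec, dotProduct_smul]; rfl
  -- inverse of K m
  have hKinv : ∀ m, (K m)⁻¹ *ᵥ (K m *ᵥ a) = a := fun m => by
    rw [mulVec_mulVec, Matrix.nonsing_inv_mul (K m) (hK m).det_pos.ne'.isUnit, one_mulVec]
  constructor
  · -- membership: the optimal f
    refine ⟨fun m => d m • (K m *ᵥ a), ?_⟩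
    have hsumf : (∑ m, d m • (K m *ᵥ a)) = (∑ m, d m • K m) *ᵥ a := by
      rw [sum_mulVec']
      exact Finset.sum_congr rfl fun m _ => (smul_mulVec (d m) (K m) a).symm
    have hres : y - ∑ m, d m • (K m *ᵥ a) = σ ^ 2 • a := by
      rw [hsumf, ← hSa, hSdef, add_mulVec, smul_mulVec, one_mulVec]
      abel
    rw [hres]
    have hreg : ∀ m, (d m • (K m *ᵥ a)) ⬝ᵥ ((K m)⁻¹ *ᵥ (d m • (K m *ᵥ a))) / d m
        = d m * (a ⬝ᵥ (K m *ᵥ a)) := by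
      intro m
      have hdm : d m ≠ 0 := (hd m).ne'
      rw [mulVec_smul, hKinv m, dotProduct_smul, smul_dotProduct, smul_eq_mul, smul_eq_mul,
        dotProduct_comm (K m *ᵥ a) a]
      field_simp
    rw [Finset.sum_congr rfl fun m _ => hreg m]
    rw [smul_dotProduct, dotProduct_smul, dotProduct_comm y a, ← hSq]
    simp only [smul_eq_mul]
    field_simp
  · -- lower bound
    rintro z ⟨f, rfl⟩
    rw [dotProduct_comm y a]
    set r : Fin N → ℝ := y - ∑ m, f m with hr
    have hsplit : a ⬝ᵥ y = a ⬝ᵥ r + ∑ m, a ⬝ᵥ f m := by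
      rw [hr, dotProduct_sub, dotProduct_sum']
      ring
    clear_value r
    -- per-kernel lower bound
    have hm : ∀ m, 2 * (d m) * (a ⬝ᵥ f m) - (d m)^2 * (a ⬝ᵥ (K m *ᵥ a))
        ≤ (f m) ⬝ᵥ ((K m)⁻¹ *ᵥ f m) := by
      intro m
      have hsymmKi : ((K m)⁻¹)ᵀ = (K m)⁻¹ := (hK m).inv.1
      have hcross : (K m *ᵥ a) ⬝ᵥ ((K m)⁻¹ *ᵥ f m) = a ⬝ᵥ f m := by
        rw [dotmv_symm _ hsymmKi, hKinv m, dotProduct_comm]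
      have hfc : f m ⬝ᵥ ((K m)⁻¹ *ᵥ (d m • (K m *ᵥ a))) = d m * (a ⬝ᵥ f m) := by
        rw [mulVec_smul, hKinv m, dotProduct_smul, smul_eq_mul, dotProduct_comm]
      have hcf : (d m • (K m *ᵥ a)) ⬝ᵥ ((K m)⁻¹ *ᵥ f m) = d m * (a ⬝ᵥ f m) := by
        rw [smul_dotProduct, hcross, smul_eq_mul]
      have hcc : (d m • (K m *ᵥ a)) ⬝ᵥ ((K m)⁻¹ *ᵥ (d m • (K m *ᵥ a)))
          = d m ^ 2 * (a ⬝ᵥ (K m *ᵥ a)) := by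
        rw [mulVec_smul, hKinv m, dotProduct_smul, smul_dotProduct, smul_eq_mul, smul_eq_mul,
          dotProduct_comm (K m *ᵥ a) a]
        ring
      have h0 : 0 ≤ (f m - d m • (K m *ᵥ a)) ⬝ᵥ ((K m)⁻¹ *ᵥ (f m - d m • (K m *ᵥ a))) := by
        have := (hK m).inv.posSemidef.dotProduct_mulVec_nonneg (f m - d m • (K m *ᵥ a))
        rwa [star_trivial] at this
      rw [mulVec_sub, dotProduct_sub, sub_dotProduct, sub_dotProduct, hfc, hcf, hcc] at h0
      linarith [h0]
    have hmdiv : ∀ m, 2 * (a ⬝ᵥ f m) - d m * (a ⬝ᵥ (K m *ᵥ a))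
        ≤ (f m) ⬝ᵥ ((K m)⁻¹ *ᵥ f m) / d m := by
      intro m
      rw [le_div_iff₀ (hd m)]
      nlinarith [hm m]
    have hsumIneq : ∑ m, (2 * (a ⬝ᵥ f m) - d m * (a ⬝ᵥ (K m *ᵥ a)))
        ≤ ∑ m, (f m) ⬝ᵥ ((K m)⁻¹ *ᵥ f m) / d m :=
      Finset.sum_le_sum fun m _ => hmdiv m
    -- data term lower bound
    have hdata : 2 * σ ^ 2 * (a ⬝ᵥ r) - σ ^ 4 * (a ⬝ᵥ a) ≤ r ⬝ᵥ r := by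
      have h0 : 0 ≤ (r - σ ^ 2 • a) ⬝ᵥ (r - σ ^ 2 • a) := by
        have := dotProduct_star_self_nonneg (r - σ ^ 2 • a)
        rwa [star_trivial] at this
      simp only [sub_dotProduct, dotProduct_sub, smul_dotProduct, dotProduct_smul,
        smul_eq_mul, dotProduct_comm r a] at h0
      nlinarith [h0]
    have hdatadiv : (a ⬝ᵥ r) - σ ^ 2 / 2 * (a ⬝ᵥ a) ≤ 1 / (2 * σ ^ 2) * (r ⬝ᵥ r) := by
      have h2σ : (0:ℝ) < 2 * σ ^ 2 := by positivity
      rw [one_div_mul_eq_div, div_eq_mul_one_div, mul_comm, ← div_eq_mul_one_div,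
        le_div_iff₀ h2σ]
      nlinarith [hdata]
    have hsum2 : ∑ m, (2 * (a ⬝ᵥ f m) - d m * (a ⬝ᵥ (K m *ᵥ a)))
        = 2 * ∑ m, (a ⬝ᵥ f m) - ∑ m, d m * (a ⬝ᵥ (K m *ᵥ a)) := by
      rw [Finset.sum_sub_distrib, Finset.mul_sum]
    rw [hsum2] at hsumIneq
    nlinarith [hsumIneq, hdatadiv, hSq, hsplit]
end
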